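/- Let m be a positive integer and a an integer with a > m. Then ∑_{k=1}^{m} ψ₀(k)/(a+1-k)² = ∑_{k=1}^{m} ψ₁(k+a-m)/k + (1/(a-m)²)·(-ψ₀(a-m+1) + ψ₀(a+1) - ψ₀(m+1) + ψ₀(1)) - ψ₁(a+1)·ψ₀(m+1) + ψ₀(a+1)·(ψ₁(a-m+1) - ψ₁(a+1)) + (1/(a-m))·(ψ₁(a-m+1) - ψ₁(a+1)) + ψ₀(a-m+1)·(ψ₁(a+1) - ψ₁(a-m+1)) + ψ₀(1)·ψ₁(a-m+1) + (1/2)ψ₂(a-m+1) - (1/2)ψ₂(a+1). -/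

import Mathlib

open Finset

/-- Digamma function at a positive integer argument: `ψ₀ l = -γ + ∑_{i=1}^{l-1} 1/i`. -/
noncomputable def ψ₀ (l : ℕ) : ℝ :=
  -Real.eulerMascheroniConstant + ∑ i ∈ Finset.range (l - 1), (1 : ℝ) / (i + 1)

/-- Trigamma function at a positive integer argument: `ψ₁ l = π²/6 - ∑_{i=1}^{l-1} 1/i²`. -/
noncomputable def ψ₁ (l : ℕ) : ℝ :=
  Real.pi ^ 2 / 6 - ∑ i ∈ Finset.range (l - 1), (1 : ℝ) / (i + 1) ^ 2

/-- Tetragamma function at a positive integer argument: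
`ψ₂ l = -2ζ(3) + 2∑_{i=1}^{l-1} 1/i³`, where `ζ(3) = ∑_{i=1}^∞ 1/i³`. -/
noncomputable def ψ₂ (l : ℕ) : ℝ :=
  -2 * (∑' i : ℕ, (1 : ℝ) / (i + 1) ^ 3) +
    2 * ∑ i ∈ Finset.range (l - 1), (1 : ℝ) / (i + 1) ^ 3

noncomputable def hh1 (l : ℕ) : ℝ := ∑ i ∈ Finset.range l, (1:ℝ)/(i+1)
noncomputable def hh2 (l : ℕ) : ℝ := ∑ i ∈ Finset.range l, (1:ℝ)/(i+1)^2
noncomputable def hh3 (l : ℕ) : ℝ := ∑ i ∈ Finset.range l, (1:ℝ)/(i+1)^3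

lemma hh1_succ (l : ℕ) : hh1 (l+1) = hh1 l + 1/((l:ℝ)+1) := by
  simp [hh1, Finset.sum_range_succ]
lemma hh2_succ (l : ℕ) : hh2 (l+1) = hh2 l + 1/((l:ℝ)+1)^2 := by
  simp [hh2, Finset.sum_range_succ]
lemma hh3_succ (l : ℕ) : hh3 (l+1) = hh3 l + 1/((l:ℝ)+1)^3 := by
  simp [hh3, Finset.sum_range_succ]

lemma tail1 (n m : ℕ) : ∑ j ∈ range m, (1:ℝ)/((n:ℝ)+j+1) = hh1 (n+m) - hh1 n := by
  have := Finset.sum_range_add (fun i => (1:ℝ)/(i+1)) n m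
  rw [hh1, hh1, this]
  have h : ∑ x ∈ range m, (1:ℝ)/((n+x : ℕ)+1) = ∑ j ∈ range m, (1:ℝ)/((n:ℝ)+j+1) :=
    Finset.sum_congr rfl fun j _ => by push_cast; ring
  linarith

lemma tail2 (n m : ℕ) : ∑ j ∈ range m, (1:ℝ)/((n:ℝ)+j+1)^2 = hh2 (n+m) - hh2 n := by
  have := Finset.sum_range_add (fun i => (1:ℝ)/(i+1)^2) n m
  rw [hh2, hh2, this]
  have h : ∑ x ∈ range m, (1:ℝ)/((n+x : ℕ)+1)^2 = ∑ j ∈ range m, (1:ℝ)/((n:ℝ)+j+1)^2 :=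
    Finset.sum_congr rfl fun j _ => by push_cast; ring
  linarith

lemma refl1 (m : ℕ) : ∑ j ∈ range m, (1:ℝ)/((m:ℝ)-j) = hh1 m := by
  rw [hh1, ← Finset.sum_range_reflect (fun i => (1:ℝ)/(i+1)) m]
  refine Finset.sum_congr rfl fun j hj => ?_
  simp only [Finset.mem_range] at hj
  have h1 : ((m - 1 - j : ℕ) : ℝ) = (m:ℝ) - j - 1 := by
    have : (m - 1 - j : ℕ) + (j + 1) = m := by omega
    have := congrArg (Nat.cast : ℕ → ℝ) this
    push_cast at this
    linarith
  rw [h1]; ring_nf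

lemma tail3 (n m : ℕ) : ∑ j ∈ range m, (1:ℝ)/((n:ℝ)+j+1)^3 = hh3 (n+m) - hh3 n := by
  have := Finset.sum_range_add (fun i => (1:ℝ)/(i+1)^3) n m
  rw [hh3, hh3, this]
  have h : ∑ x ∈ range m, (1:ℝ)/((n+x : ℕ)+1)^3 = ∑ j ∈ range m, (1:ℝ)/((n:ℝ)+j+1)^3 :=
    Finset.sum_congr rfl fun j _ => by push_cast; ring
  linarith

lemma pf_sum (m n : ℕ) :
    ∑ j ∈ range m, 1/(((m:ℝ)-j) * ((n:ℝ)+j+1)^2)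
      = (1/((m:ℝ)+n+1)^2) * (hh1 m + (hh1 (n+m) - hh1 n))
        + (1/((m:ℝ)+n+1)) * (hh2 (n+m) - hh2 n) := by
  have hterm : ∀ j ∈ range m,
      1/(((m:ℝ)-j) * ((n:ℝ)+j+1)^2)
        = (1/((m:ℝ)+n+1)^2) * (1/((m:ℝ)-j))
          + ((1/((m:ℝ)+n+1)^2) * (1/((n:ℝ)+j+1))
            + (1/((m:ℝ)+n+1)) * (1/((n:ℝ)+j+1)^2)) := by
    intro j hj
    simp only [Finset.mem_range] at hj
    have hj' : (j:ℝ) < m := by exact_mod_cast hj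
    have h1 : ((m:ℝ)-j) ≠ 0 := by linarith
    have h2 : ((n:ℝ)+j+1) ≠ 0 := by positivity
    have h3 : ((m:ℝ)+n+1) ≠ 0 := by positivity
    field_simp
    ring
  rw [Finset.sum_congr rfl hterm, Finset.sum_add_distrib, Finset.sum_add_distrib,
    ← Finset.mul_sum, ← Finset.mul_sum, ← Finset.mul_sum, refl1, tail1, tail2]
  ring

noncomputable def FF (m n : ℕ) : ℝ := ∑ j ∈ range m, hh1 (m-1-j) / ((n:ℝ)+j+1)^2
noncomputable def GG (m n : ℕ) : ℝ := ∑ k ∈ range m, hh2 (n+k) / ((k:ℝ)+1)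

lemma key (n : ℕ) (hn : 1 ≤ n) : ∀ m, 1 ≤ m →
    FF m n + GG m n
      = (1/(n:ℝ)^2) * (hh1 (n+m) - hh1 n - hh1 m) + hh1 m * hh2 (n+m)
        + (hh1 (n+m) - hh1 n) * (hh2 (n+m) - hh2 n)
        + (1/(n:ℝ)) * (hh2 (n+m) - hh2 n) + hh3 n - hh3 (n+m) := by
  have hn0 : (n:ℝ) ≠ 0 := by positivity
  intro m
  induction m with
  | zero => omega
  | succ m ih =>
    intro _
    by_cases hm : 1 ≤ m
    · have hIH := ih hm
      -- expand FF (m+1)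
      have hF : FF (m+1) n = FF m n + ∑ j ∈ range m, 1/(((m:ℝ)-j) * ((n:ℝ)+j+1)^2) := by
        have hsplit : ∀ j ∈ range m, hh1 (m+1-1-j) / ((n:ℝ)+j+1)^2
            = hh1 (m-1-j) / ((n:ℝ)+j+1)^2 + 1/(((m:ℝ)-j) * ((n:ℝ)+j+1)^2) := by
          intro j hj
          simp only [Finset.mem_range] at hj
          have e1 : (m+1-1-j : ℕ) = (m-1-j) + 1 := by omega
          have e2 : ((m-1-j : ℕ) : ℝ) + 1 = (m:ℝ) - j := by
            have h0 : ((m - 1 - j : ℕ) + (j + 1) : ℕ) = m := by omega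
            have h0' := congrArg (Nat.cast : ℕ → ℝ) h0
            push_cast at h0'
            linarith
          rw [e1, hh1_succ, e2]
          have h2 : ((n:ℝ)+j+1) ≠ 0 := by positivity
          have hj' : (j:ℝ) < m := by exact_mod_cast hj
          have h1 : ((m:ℝ)-j) ≠ 0 := by linarith
          field_simp
        rw [FF, Finset.sum_range_succ, Finset.sum_congr rfl hsplit, Finset.sum_add_distrib]
        have hlast : hh1 (m+1-1-m) = 0 := by simp [hh1]
        rw [hlast, FF]
        ring
      have hG : GG (m+1) n = GG m n + hh2 (n+m) / ((m:ℝ)+1) := by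
        rw [GG, Finset.sum_range_succ, GG]
      have hc : ((m:ℝ)+n+1) ≠ 0 := by positivity
      have hm1 : ((m:ℝ)+1) ≠ 0 := by positivity
      have e3 : (n + (m+1) : ℕ) = (n+m) + 1 := by omega
      rw [hF, hG, pf_sum, e3, hh1_succ, hh2_succ, hh3_succ, hh1_succ]
      have hFm : FF m n = (1/(n:ℝ)^2) * (hh1 (n+m) - hh1 n - hh1 m) + hh1 m * hh2 (n+m)
        + (hh1 (n+m) - hh1 n) * (hh2 (n+m) - hh2 n)
        + (1/(n:ℝ)) * (hh2 (n+m) - hh2 n) + hh3 n - hh3 (n+m) - GG m n := by linarith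
      rw [hFm]
      have ecast : ((n+m : ℕ) : ℝ) = (n:ℝ) + m := by push_cast; ring
      rw [ecast]
      field_simp
      ring
    · have hm0 : m = 0 := by omega
      subst hm0
      have h1 : FF 1 n = 0 := by simp [FF, hh1]
      have h2 : GG 1 n = hh2 n := by simp [GG]
      rw [h1, h2, hh1_succ, hh2_succ, hh3_succ, hh1_succ,
        show hh1 0 = (0:ℝ) from by simp [hh1]]
      push_cast
      have hn1 : ((n:ℝ)+1) ≠ 0 := by positivity
      field_simp
      ring

lemma Icc_range (m : ℕ) (f : ℕ → ℝ) : ∑ k ∈ Icc 1 m, f k = ∑ i ∈ range m, f (1+i) := by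
  rw [← Finset.Ico_add_one_right_eq_Icc, Finset.sum_Ico_eq_sum_range]
  simp

lemma psi0_succ (l : ℕ) : ψ₀ (l+1) = -Real.eulerMascheroniConstant + hh1 l := by
  simp [ψ₀, hh1]
lemma psi1_succ (l : ℕ) : ψ₁ (l+1) = Real.pi^2/6 - hh2 l := by
  simp [ψ₁, hh2]
lemma psi2_succ (l : ℕ) : ψ₂ (l+1) = -2*(∑' i : ℕ, (1 : ℝ) / (i + 1) ^ 3) + 2 * hh3 l := by
  simp [ψ₂, hh3]

theorem stmt5 (m a : ℕ) (hm : 0 < m) (ha : m < a) :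
    ∑ k ∈ Finset.Icc 1 m, ψ₀ k / ((a + 1 - k : ℕ) : ℝ) ^ 2 =
      ∑ k ∈ Finset.Icc 1 m, ψ₁ (k + a - m) / (k : ℝ) +
        (1 / ((a : ℝ) - m) ^ 2) *
          (-ψ₀ (a - m + 1) + ψ₀ (a + 1) - ψ₀ (m + 1) + ψ₀ 1) -
        ψ₁ (a + 1) * ψ₀ (m + 1) + ψ₀ (a + 1) * (ψ₁ (a - m + 1) - ψ₁ (a + 1)) +
        (1 / ((a : ℝ) - m)) * (ψ₁ (a - m + 1) - ψ₁ (a + 1)) +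
        ψ₀ (a - m + 1) * (ψ₁ (a + 1) - ψ₁ (a - m + 1)) +
        ψ₀ 1 * ψ₁ (a - m + 1) + (1 / 2) * ψ₂ (a - m + 1) - (1 / 2) * ψ₂ (a + 1) := by
  obtain ⟨n, hn1, rfl⟩ : ∃ n, 1 ≤ n ∧ a = m + n := ⟨a - m, by omega, by omega⟩
  set γ := Real.eulerMascheroniConstant with hγ
  set Z := (∑' i : ℕ, (1 : ℝ) / (i + 1) ^ 3) with hZ
  have hmn : m + n - m = n := by omega
  have hL : ∑ k ∈ Finset.Icc 1 m, ψ₀ k / ((m + n + 1 - k : ℕ) : ℝ) ^ 2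
      = -γ * (hh2 (n+m) - hh2 n) + FF m n := by
    rw [Icc_range]
    have hterm : ∀ i ∈ range m, ψ₀ (1+i) / ((m + n + 1 - (1+i) : ℕ) : ℝ) ^ 2
        = (-γ) * (1/(((m:ℝ)+n-i))^2) + hh1 i / (((m:ℝ)+n-i))^2 := by
      intro i hi
      simp only [Finset.mem_range] at hi
      have e1 : (m + n + 1 - (1+i) : ℕ) = m + n - i := by omega
      have e2 : ((m + n - i : ℕ) : ℝ) = (m:ℝ) + n - i := by
        have h0 : ((m + n - i : ℕ) + i : ℕ) = m + n := by omega
        have h0' := congrArg (Nat.cast : ℕ → ℝ) h0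
        push_cast at h0'
        linarith
      rw [e1, e2, show (1+i) = i+1 from by omega, psi0_succ]
      ring
    rw [Finset.sum_congr rfl hterm, Finset.sum_add_distrib, ← Finset.mul_sum]
    have r1 : ∑ i ∈ range m, 1/(((m:ℝ)+n-i))^2 = hh2 (n+m) - hh2 n := by
      rw [← Finset.sum_range_reflect (fun i => 1/(((m:ℝ)+n-i))^2) m, ← tail2 n m]
      refine Finset.sum_congr rfl fun j hj => ?_
      simp only [Finset.mem_range] at hj
      have e2 : ((m - 1 - j : ℕ) : ℝ) = (m:ℝ) - 1 - j := by
        have h0 : ((m - 1 - j : ℕ) + (j + 1) : ℕ) = m := by omega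
        have h0' := congrArg (Nat.cast : ℕ → ℝ) h0
        push_cast at h0'
        linarith
      rw [e2]
      ring_nf
    have r2 : ∑ i ∈ range m, hh1 i / (((m:ℝ)+n-i))^2 = FF m n := by
      rw [← Finset.sum_range_reflect (fun i => hh1 i / (((m:ℝ)+n-i))^2) m, FF]
      refine Finset.sum_congr rfl fun j hj => ?_
      simp only [Finset.mem_range] at hj
      have e2 : ((m - 1 - j : ℕ) : ℝ) = (m:ℝ) - 1 - j := by
        have h0 : ((m - 1 - j : ℕ) + (j + 1) : ℕ) = m := by omega
        have h0' := congrArg (Nat.cast : ℕ → ℝ) h0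
        push_cast at h0'
        linarith
      rw [e2]
      ring_nf
    rw [r1, r2]
  have hR1 : ∑ k ∈ Finset.Icc 1 m, ψ₁ (k + (m + n) - m) / (k : ℝ)
      = Real.pi^2/6 * hh1 m - GG m n := by
    rw [Icc_range]
    have hterm : ∀ i ∈ range m, ψ₁ (1 + i + (m + n) - m) / ((1+i : ℕ) : ℝ)
        = Real.pi^2/6 * (1/((i:ℝ)+1)) - hh2 (n+i) / ((i:ℝ)+1) := by
      intro i hi
      have e1 : (1 + i + (m + n) - m : ℕ) = (n + i) + 1 := by omega
      rw [e1, psi1_succ]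
      push_cast
      ring
    rw [Finset.sum_congr rfl hterm, Finset.sum_sub_distrib, ← Finset.mul_sum]
    rw [GG, hh1]
  rw [hL, hmn, hR1]
  have hc : ((m + n : ℕ) : ℝ) - (m:ℕ) = (n:ℝ) := by push_cast; ring
  rw [hc]
  have e3 : (m + n + 1 : ℕ) = (n + m) + 1 := by omega
  rw [e3, psi0_succ, psi0_succ, psi0_succ, show ψ₀ 1 = ψ₀ (0 + 1) from rfl, psi0_succ,
    psi1_succ, psi1_succ, psi2_succ, psi2_succ,
    show hh1 0 = (0:ℝ) from by simp [hh1]]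
  have hkey := key n hn1 m hm
  linear_combination hkey
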